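/- For every real number M > 0 and every real η with 0 ≤ η ≤ 1/2, (2/π) ∫_{ℝ²} e^{−2M(x² + y²)} · |4M(1 − η)(x² + y²) + 2η − 1| dx dy = (1/M)·(4(1 − η)·e^{−(1 − 2η)/(2(1 − η))} − 1). -/

import Mathlib

open MeasureTheory

open Set Real in
/-- 1D radial integral with absolute value. -/
lemma key1d (lam a c : ℝ) (hlam : 0 < lam) (ha : 0 < a) (hc : c ≤ 0) :
    ∫ r in Set.Ioi (0:ℝ), r * Real.exp (-(lam * r ^ 2)) * |a * r ^ 2 + c| =
      -(a + lam * c) / (2 * lam ^ 2) +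
        a * Real.exp (-(lam * (-c / a))) / lam ^ 2 := by
  set t0 : ℝ := -c / a with ht0def
  have ht0 : 0 ≤ t0 := div_nonneg (neg_nonneg.2 hc) ha.le
  set r0 : ℝ := Real.sqrt t0 with hr0def
  have hr0 : 0 ≤ r0 := Real.sqrt_nonneg _
  have hr0sq : r0 ^ 2 = t0 := Real.sq_sqrt ht0
  have hat0 : a * t0 + c = 0 := by
    rw [ht0def]; field_simp; ring
  set A : ℝ := -a / (2 * lam) with hA
  set B : ℝ := -(a + lam * c) / (2 * lam ^ 2) with hB
  obtain ⟨F, hF⟩ : ∃ F : ℝ → ℝ, F = fun r => Real.exp (-(lam * r ^ 2)) * (A * r ^ 2 + B) :=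
    ⟨_, rfl⟩
  have hlam' : lam ≠ 0 := hlam.ne'
  -- derivative
  have hderiv : ∀ r : ℝ, HasDerivAt F (r * Real.exp (-(lam * r ^ 2)) * (a * r ^ 2 + c)) r := by
    intro r
    have h1 : HasDerivAt (fun r : ℝ => -(lam * r ^ 2)) (-(lam * (2 * r))) r := by
      exact (((hasDerivAt_pow 2 r).const_mul lam).neg).congr_deriv (by simp)
    have h2 : HasDerivAt (fun r : ℝ => Real.exp (-(lam * r ^ 2)))
        (Real.exp (-(lam * r ^ 2)) * (-(lam * (2 * r)))) r := h1.exp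
    have h3 : HasDerivAt (fun r : ℝ => A * r ^ 2 + B) (A * (2 * r)) r := by
      simpa using ((hasDerivAt_pow 2 r).const_mul A).add_const B
    have h4 := h2.mul h3
    rw [hF]
    refine h4.congr_deriv ?_
    rw [hA, hB]
    field_simp
    ring
  -- integrability pieces
  have hI3 : IntegrableOn (fun x : ℝ => x ^ 3 * Real.exp (-lam * x ^ 2)) (Set.Ioi 0) := by
    have h := integrableOn_rpow_mul_exp_neg_mul_sq hlam (s := 3) (by norm_num)
    refine h.congr_fun (fun x hx => ?_) measurableSet_Ioi
    dsimp only
    rw [show (3:ℝ) = ((3:ℕ):ℝ) by norm_num, Real.rpow_natCast]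
  have hI1 : IntegrableOn (fun x : ℝ => x ^ 1 * Real.exp (-lam * x ^ 2)) (Set.Ioi 0) := by
    have h := integrableOn_rpow_mul_exp_neg_mul_sq hlam (s := 1) (by norm_num)
    refine h.congr_fun (fun x hx => ?_) measurableSet_Ioi
    dsimp only
    rw [show (1:ℝ) = ((1:ℕ):ℝ) by norm_num, Real.rpow_natCast]
  have hg1int : IntegrableOn
      (fun r : ℝ => r * Real.exp (-(lam * r ^ 2)) * (a * r ^ 2 + c)) (Set.Ioi 0) := by
    refine IntegrableOn.congr_fun ((hI3.const_mul a).add (hI1.const_mul c))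
      (fun x hx => ?_) measurableSet_Ioi
    simp only [Pi.add_apply, neg_mul]
    ring
  have hg1intr0 : IntegrableOn
      (fun r : ℝ => r * Real.exp (-(lam * r ^ 2)) * (a * r ^ 2 + c)) (Set.Ioi r0) := by
    exact hg1int.mono_set (Set.Ioi_subset_Ioi hr0)
  -- the absolute-value function
  set h : ℝ → ℝ := fun r => r * Real.exp (-(lam * r ^ 2)) * |a * r ^ 2 + c| with hh
  -- pointwise signs
  have hsign1 : ∀ x ∈ Set.Ioc (0:ℝ) r0, a * x ^ 2 + c ≤ 0 := by
    intro x hx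
    have hx2 : x ^ 2 ≤ t0 := by
      rw [← hr0sq]
      exact pow_le_pow_left₀ hx.1.le hx.2 2
    nlinarith
  have hsign2 : ∀ x ∈ Set.Ioi r0, 0 ≤ a * x ^ 2 + c := by
    intro x hx
    have hx2 : t0 ≤ x ^ 2 := by
      rw [← hr0sq]
      exact pow_le_pow_left₀ hr0 (le_of_lt hx) 2
    nlinarith
  -- split the integral
  have hunion : Set.Ioc (0:ℝ) r0 ∪ Set.Ioi r0 = Set.Ioi 0 := Set.Ioc_union_Ioi_eq_Ioi hr0
  have hcont : Continuous h := by
    apply Continuous.mul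
    · exact (continuous_id.mul ((continuous_const.mul (continuous_pow 2)).neg.rexp))
    · exact ((continuous_const.mul (continuous_pow 2)).add continuous_const).abs
  have hint1 : IntegrableOn h (Set.Ioc (0:ℝ) r0) := hcont.integrableOn_Ioc
  have hint2 : IntegrableOn h (Set.Ioi r0) := by
    refine hg1intr0.congr_fun (fun x hx => ?_) measurableSet_Ioi
    simp only [hh, abs_of_nonneg (hsign2 x hx)]
  have hsplit : ∫ r in Set.Ioi (0:ℝ), h r =
      (∫ r in Set.Ioc (0:ℝ) r0, h r) + ∫ r in Set.Ioi r0, h r := by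
    rw [← hunion]
    exact setIntegral_union Set.Ioc_disjoint_Ioi_same measurableSet_Ioi hint1 hint2
  -- finite piece
  have hfin : ∫ r in Set.Ioc (0:ℝ) r0, h r = F 0 - F r0 := by
    have he : EqOn h (fun r => r * Real.exp (-(lam * r ^ 2)) * (-(a * r ^ 2 + c)))
        (Set.Ioc (0:ℝ) r0) := by
      intro x hx
      simp only [hh, abs_of_nonpos (hsign1 x hx)]
    rw [setIntegral_congr_fun measurableSet_Ioc he,
      ← intervalIntegral.integral_of_le hr0]
    have : ∫ r in (0:ℝ)..r0, r * Real.exp (-(lam * r ^ 2)) * (-(a * r ^ 2 + c)) =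
        (-F) r0 - (-F) 0 := by
      apply intervalIntegral.integral_eq_sub_of_hasDerivAt
      · intro x _
        have := (hderiv x).neg
        convert this using 1
        ring
      · apply Continuous.intervalIntegrable
        fun_prop
    rw [this]
    simp only [Pi.neg_apply]
    ring
  -- infinite piece
  have hFtend : Filter.Tendsto F Filter.atTop (nhds 0) := by
    have hx : Filter.Tendsto (fun r : ℝ => lam * r ^ 2) Filter.atTop Filter.atTop :=
      (Filter.tendsto_pow_atTop two_ne_zero).const_mul_atTop hlam
    have h0 : Filter.Tendsto (fun r : ℝ => (lam * r ^ 2) * Real.exp (-(lam * r ^ 2)))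
        Filter.atTop (nhds 0) := by
      have := (Real.tendsto_pow_mul_exp_neg_atTop_nhds_zero 1).comp hx
      simpa [Function.comp_def] using this
    have h0' : Filter.Tendsto (fun r : ℝ => Real.exp (-(lam * r ^ 2)))
        Filter.atTop (nhds 0) := by
      have := Real.tendsto_exp_atBot.comp (Filter.tendsto_neg_atTop_atBot.comp hx)
      simpa [Function.comp_def] using this
    have := (h0.const_mul (A / lam)).add (h0'.const_mul B)
    have heq : (fun r : ℝ => A / lam * ((lam * r ^ 2) * Real.exp (-(lam * r ^ 2))) +
        B * Real.exp (-(lam * r ^ 2))) = F := by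
      funext r
      rw [hF]
      field_simp
    rw [heq] at this
    simpa using this
  have hinf : ∫ r in Set.Ioi r0, h r = -F r0 := by
    have he : EqOn h (fun r => r * Real.exp (-(lam * r ^ 2)) * (a * r ^ 2 + c))
        (Set.Ioi r0) := by
      intro x hx
      simp only [hh, abs_of_nonneg (hsign2 x hx)]
    rw [setIntegral_congr_fun measurableSet_Ioi he]
    have := integral_Ioi_of_hasDerivAt_of_tendsto' (f := F)
      (fun x _ => hderiv x) hg1intr0 hFtend
    rw [this]; ring
  -- put together
  have hAB : A * t0 + B = -a / (2 * lam ^ 2) := by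
    rw [hA, hB, ht0def]
    field_simp
    ring
  have hFr0 : F r0 = Real.exp (-(lam * t0)) * (-a / (2 * lam ^ 2)) := by
    rw [hF]
    simp only
    rw [hr0sq, hAB]
  have hF0 : F 0 = B := by simp [hF]
  rw [hsplit, hfin, hinf, hFr0, hF0, hB, ht0def]
  field_simp
  ring

/-- **Absolute Wigner volume of the lossy `M`-mode W state on the diagonal slice.**
For `M > 0` and loss parameter `0 ≤ η ≤ 1/2`,
`(2/π) ∫_{ℝ²} e^{−2M(x²+y²)} |4M(1−η)(x²+y²) + 2η − 1| dx dy
  = (1/M)(4(1−η) e^{−(1−2η)/(2(1−η))} − 1)`. -/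
theorem stmt7 (M : ℝ) (hM : 0 < M) (η : ℝ) (hη0 : 0 ≤ η) (hη1 : η ≤ 1 / 2) :
    (2 / Real.pi) * ∫ p : ℝ × ℝ,
        Real.exp (-(2 * M * (p.1 ^ 2 + p.2 ^ 2))) *
          |4 * M * (1 - η) * (p.1 ^ 2 + p.2 ^ 2) + 2 * η - 1| =
      (1 / M) * (4 * (1 - η) * Real.exp (-((1 - 2 * η) / (2 * (1 - η)))) - 1) := by
  have hη : (0:ℝ) < 1 - η := by linarith
  set a : ℝ := 4 * M * (1 - η) with haa
  set c : ℝ := 2 * η - 1 with hcc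
  have ha : 0 < a := by positivity
  have hc : c ≤ 0 := by rw [hcc]; linarith
  set f : ℝ × ℝ → ℝ := fun p =>
    Real.exp (-(2 * M * (p.1 ^ 2 + p.2 ^ 2))) *
      |4 * M * (1 - η) * (p.1 ^ 2 + p.2 ^ 2) + 2 * η - 1| with hf
  have hpolar : (∫ p : ℝ × ℝ, f p) =
      (∫ r in Set.Ioi (0:ℝ), r * Real.exp (-(2 * M * r ^ 2)) * |a * r ^ 2 + c|) *
        (2 * Real.pi) := by
    rw [← integral_comp_polarCoord_symm f]
    have htarget : polarCoord.target = Set.Ioi (0:ℝ) ×ˢ Set.Ioo (-Real.pi) Real.pi := rfl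
    rw [htarget]
    have hstep : ∀ p : ℝ × ℝ, p.1 • f (polarCoord.symm p) =
        (fun r => r * Real.exp (-(2 * M * r ^ 2)) * |a * r ^ 2 + c|) p.1 *
          (fun _ : ℝ => (1:ℝ)) p.2 := by
      intro p
      have hsym : polarCoord.symm p = (p.1 * Real.cos p.2, p.1 * Real.sin p.2) := rfl
      have hsq : (p.1 * Real.cos p.2) ^ 2 + (p.1 * Real.sin p.2) ^ 2 = p.1 ^ 2 := by
        have := Real.sin_sq_add_cos_sq p.2
        nlinarith [this]
      rw [hsym, hf]
      simp only [smul_eq_mul, hsq]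
      rw [haa, hcc]
      ring_nf
    rw [setIntegral_congr_fun (measurableSet_Ioi.prod measurableSet_Ioo)
      (fun p _ => hstep p)]
    rw [Measure.volume_eq_prod, setIntegral_prod_mul
      (fun r => r * Real.exp (-(2 * M * r ^ 2)) * |a * r ^ 2 + c|)
      (fun _ : ℝ => (1:ℝ)) (Set.Ioi 0) (Set.Ioo (-Real.pi) Real.pi)]
    congr 1
    simp only [integral_const, MeasurableSet.univ, Measure.restrict_apply, Set.univ_inter,
      Real.volume_Ioo, smul_eq_mul, mul_one]
    simp only [Measure.real, Measure.restrict_apply MeasurableSet.univ, Set.univ_inter, Real.volume_Ioo]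
    rw [ENNReal.toReal_ofReal (by linarith [Real.pi_pos] : (0:ℝ) ≤ Real.pi - -Real.pi)]
    ring
  have hkey := key1d (2 * M) a c (by linarith) ha hc
  rw [hpolar, hkey]
  have hexp : (2 * M) * (-c / a) = (1 - 2 * η) / (2 * (1 - η)) := by
    rw [haa, hcc]
    field_simp
    ring
  rw [hexp]
  have hpi : Real.pi ≠ 0 := Real.pi_ne_zero
  rw [haa, hcc]
  field_simp
  ring
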